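/- Let n > 0, R > 0, c > 0, I ≠ 0, C₀ > 0 be real constants, and define F(ρ, r) = 1/(2r⁴ρ²) + (Rc(n+2)/(2I²))·ρ^(2/n) − C₀ for ρ, r > 0. Set ρ* = (2I²nC₀/(Rc(n+1)(n+2)))^(n/2). Then for each fixed r > r_min, where r_min = (2ρ*²(C₀ − R·c·(n/2+1)·ρ*^(2/n)/I²))^(−1/4), there exists ρ > 0 with F(ρ, r) = 0. -/

import Mathlib

open Real

/-- Existence of a positive root of the implicit ideal-gas relation for radii above
the threshold radius. -/
theorem exists_density_of_radius_gt
    (n R c I C₀ : ℝ) (hn : 0 < n) (hR : 0 < R) (hc : 0 < c) (hI : I ≠ 0) (hC₀ : 0 < C₀)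
    (F : ℝ → ℝ → ℝ)
    (hF : ∀ ρ r, F ρ r = 1 / (2 * r ^ 4 * ρ ^ 2)
        + (R * c * (n + 2) / (2 * I ^ 2)) * ρ ^ (2 / n) - C₀)
    (ρstar : ℝ)
    (hρstar : ρstar = (2 * I ^ 2 * n * C₀ / (R * c * (n + 1) * (n + 2))) ^ (n / 2))
    (rmin : ℝ)
    (hrmin : rmin = (2 * ρstar ^ 2
        * (C₀ - R * c * (n / 2 + 1) * ρstar ^ (2 / n) / I ^ 2)) ^ (-(1 / 4) : ℝ))
    (r : ℝ) (hr : rmin < r) :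
    ∃ ρ > (0 : ℝ), F ρ r = 0 := by
  have hI2 : (0:ℝ) < I ^ 2 := by positivity
  set B : ℝ := 2 * I ^ 2 * n * C₀ / (R * c * (n + 1) * (n + 2)) with hBdef
  have hB : 0 < B := by positivity
  have hρpos : 0 < ρstar := by rw [hρstar]; exact Real.rpow_pos_of_pos hB _
  -- ρstar ^ (2/n) = B
  have hexp : n / 2 * (2 / n) = 1 := by field_simp
  have hρ2n : ρstar ^ (2 / n) = B := by
    rw [hρstar, ← Real.rpow_mul hB.le, hexp, Real.rpow_one]
  -- coefficient times B
  have hn1 : n + 1 ≠ 0 := by positivity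
  have hn2 : n + 2 ≠ 0 := by positivity
  have hcoef : R * c * (n + 2) / (2 * I ^ 2) * B = n * C₀ / (n + 1) := by
    rw [hBdef]; field_simp
  have hbaseeq : C₀ - R * c * (n / 2 + 1) * B / I ^ 2 = C₀ / (n + 1) := by
    rw [hBdef]; field_simp; ring
  -- rmin
  set base : ℝ := 2 * ρstar ^ 2 * (C₀ / (n + 1)) with hbasedef
  have hbasepos : 0 < base := by positivity
  have hrmin' : rmin = base ^ (-(1 / 4) : ℝ) := by rw [hrmin, hρ2n, hbaseeq]
  have hrminpos : 0 < rmin := by rw [hrmin']; exact Real.rpow_pos_of_pos hbasepos _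
  have hrpos : 0 < r := hrminpos.trans hr
  have hrmin4 : rmin ^ 4 = base⁻¹ := by
    rw [hrmin', ← Real.rpow_natCast (base ^ (-(1/4):ℝ)) 4, ← Real.rpow_mul hbasepos.le]
    norm_num [Real.rpow_neg_one]
  have hr4 : rmin ^ 4 < r ^ 4 := by
    exact pow_lt_pow_left₀ hr hrminpos.le (by norm_num)
  -- value at ρstar is negative
  have hFstar : F ρstar r < 0 := by
    rw [hF, hρ2n, hcoef]
    have h1 : 2 * rmin ^ 4 * ρstar ^ 2 = (n + 1) / C₀ := by
      rw [hrmin4, hbasedef]; field_simp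
    have h2 : (n + 1) / C₀ < 2 * r ^ 4 * ρstar ^ 2 := by
      rw [← h1]
      nlinarith [mul_lt_mul_of_pos_right hr4 (show (0:ℝ) < ρstar ^ 2 by positivity)]
    have hpos : (0:ℝ) < (n + 1) / C₀ := by positivity
    have h3 : 1 / (2 * r ^ 4 * ρstar ^ 2) < 1 / ((n + 1) / C₀) :=
      one_div_lt_one_div_of_lt hpos h2
    have h4 : 1 / ((n + 1) / C₀) = C₀ / (n + 1) := by field_simp
    have h5 : n * C₀ / (n + 1) - C₀ = -(C₀ / (n + 1)) := by field_simp; ring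
    linarith [h3, h4 ▸ h3]
  -- small ρ₀ with positive value
  set ρ₀ : ℝ := min ρstar (Real.sqrt (1 / (2 * r ^ 4 * (C₀ + 1)))) with hρ₀def
  have hsqpos : 0 < Real.sqrt (1 / (2 * r ^ 4 * (C₀ + 1))) :=
    Real.sqrt_pos.mpr (by positivity)
  have hρ₀pos : 0 < ρ₀ := lt_min hρpos hsqpos
  have hρ₀le : ρ₀ ≤ ρstar := min_le_left _ _
  have hρ₀sq : ρ₀ ^ 2 ≤ 1 / (2 * r ^ 4 * (C₀ + 1)) := by
    have := min_le_right ρstar (Real.sqrt (1 / (2 * r ^ 4 * (C₀ + 1))))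
    calc ρ₀ ^ 2 ≤ (Real.sqrt (1 / (2 * r ^ 4 * (C₀ + 1)))) ^ 2 := by
          exact pow_le_pow_left₀ hρ₀pos.le this 2
      _ = 1 / (2 * r ^ 4 * (C₀ + 1)) := Real.sq_sqrt (by positivity)
  have hFρ₀ : 0 < F ρ₀ r := by
    rw [hF]
    have hd : 0 < 2 * r ^ 4 * ρ₀ ^ 2 := by positivity
    have h1 : 2 * r ^ 4 * ρ₀ ^ 2 ≤ 1 / (C₀ + 1) := by
      have h2 : 2 * r ^ 4 * (1 / (2 * r ^ 4 * (C₀ + 1))) = 1 / (C₀ + 1) := by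
        field_simp
      nlinarith [mul_le_mul_of_nonneg_left hρ₀sq (show (0:ℝ) ≤ 2 * r ^ 4 by positivity)]
    have h3 : C₀ + 1 ≤ 1 / (2 * r ^ 4 * ρ₀ ^ 2) := by
      have := one_div_le_one_div_of_le hd h1
      rwa [one_div_one_div] at this
    have h4 : 0 ≤ R * c * (n + 2) / (2 * I ^ 2) * ρ₀ ^ (2 / n) := by
      have : (0:ℝ) < ρ₀ ^ (2 / n) := Real.rpow_pos_of_pos hρ₀pos _
      positivity
    linarith
  -- IVT
  have hcont : ContinuousOn (fun ρ => F ρ r) (Set.Icc ρ₀ ρstar) := by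
    have hne : ∀ x ∈ Set.Icc ρ₀ ρstar, x ≠ 0 := fun x hx =>
      (lt_of_lt_of_le hρ₀pos hx.1).ne'
    simp only [hF]
    apply ContinuousOn.sub _ continuousOn_const
    apply ContinuousOn.add
    · exact ContinuousOn.div continuousOn_const
        (by fun_prop) (fun x hx => by
          have := hne x hx; positivity)
    · exact ContinuousOn.mul continuousOn_const
        (ContinuousOn.rpow_const continuousOn_id (fun x hx => Or.inl (hne x hx)))
  have hmem : (0:ℝ) ∈ Set.Icc (F ρstar r) (F ρ₀ r) := ⟨hFstar.le, hFρ₀.le⟩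
  obtain ⟨ρ, hρmem, hρeq⟩ := intermediate_value_Icc' hρ₀le hcont hmem
  exact ⟨ρ, lt_of_lt_of_le hρ₀pos hρmem.1, hρeq⟩
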